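/- Let ε ∈ (0,1), let ℓ ≥ 0, and let ℓ₀, ℓ₁, …, ℓ_N be nonnegative reals such that for every m < N with ℓ_m > (1+ε)·ℓ one has ℓ_{m+1} ≤ (ε/4)·ℓ_m + ℓ. Then for every m < N: (a) if ℓ_m > 8ℓ/ε then ℓ_{m+1} ≤ ε·ℓ_m; (b) if (1+ε)·ℓ < ℓ_m ≤ 8ℓ/ε then ℓ_{m+1} ≤ 3ℓ; and (c) if (1+ε)·ℓ < ℓ_m ≤ 3ℓ then ℓ_{m+1} ≤ (1+ε)·ℓ. Consequently, if ℓ > 0, ℓ₀ > ℓ, and N ≥ ⌈log(ℓ₀/ℓ)/log(1/ε)⌉ + 2, then there exists m ≤ N with ℓ_m ≤ (1+ε)·ℓ. -/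
import Mathlib


/-- **Iteration-count analysis of the greedy walk.** Let `ε ∈ (0,1)`, `ℓ ≥ 0`, and
let `ℓ₀, …, ℓ_N` be nonnegative reals with `ℓ_{m+1} ≤ (ε/4) ℓ_m + ℓ` whenever
`m < N` and `ℓ_m > (1+ε) ℓ`. Then for every `m < N`: (a) if `ℓ_m > 8ℓ/ε` then
`ℓ_{m+1} ≤ ε ℓ_m`; (b) if `(1+ε)ℓ < ℓ_m ≤ 8ℓ/ε` then `ℓ_{m+1} ≤ 3ℓ`; (c) if
`(1+ε)ℓ < ℓ_m ≤ 3ℓ` then `ℓ_{m+1} ≤ (1+ε)ℓ`. Consequently, if `ℓ > 0`, `ℓ₀ > ℓ`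
and `N ≥ ⌈log(ℓ₀/ℓ)/log(1/ε)⌉ + 2`, then some `ℓ_m` with `m ≤ N` satisfies
`ℓ_m ≤ (1+ε)ℓ`. -/
theorem stmt_7 (ε ℓ : ℝ) (hε : ε ∈ Set.Ioo (0 : ℝ) 1) (hℓ : 0 ≤ ℓ)
    (N : ℕ) (l : ℕ → ℝ) (hnonneg : ∀ m ≤ N, 0 ≤ l m)
    (hstep : ∀ m < N, (1 + ε) * ℓ < l m → l (m + 1) ≤ ε / 4 * l m + ℓ) :
    (∀ m < N,
      (8 * ℓ / ε < l m → l (m + 1) ≤ ε * l m) ∧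
      ((1 + ε) * ℓ < l m ∧ l m ≤ 8 * ℓ / ε → l (m + 1) ≤ 3 * ℓ) ∧
      ((1 + ε) * ℓ < l m ∧ l m ≤ 3 * ℓ → l (m + 1) ≤ (1 + ε) * ℓ)) ∧
    (0 < ℓ → ℓ < l 0 →
      (⌈Real.log (l 0 / ℓ) / Real.log (1 / ε)⌉ + 2 ≤ (N : ℤ)) →
      ∃ m ≤ N, l m ≤ (1 + ε) * ℓ) := by
  obtain ⟨hε0, hε1⟩ := hε
  have key : ∀ m < N,
      (8 * ℓ / ε < l m → l (m + 1) ≤ ε * l m) ∧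
      ((1 + ε) * ℓ < l m ∧ l m ≤ 8 * ℓ / ε → l (m + 1) ≤ 3 * ℓ) ∧
      ((1 + ε) * ℓ < l m ∧ l m ≤ 3 * ℓ → l (m + 1) ≤ (1 + ε) * ℓ) := by
    intro m hm
    refine ⟨?_, ?_, ?_⟩
    · intro h8
      have hle : (1 + ε) * ℓ ≤ 8 * ℓ / ε := by
        rw [le_div_iff₀ hε0]
        nlinarith [mul_nonneg hℓ (mul_pos hε0 (sub_pos.mpr hε1)).le,
          mul_nonneg hℓ (sub_pos.mpr hε1).le]
      have hs := hstep m hm (lt_of_le_of_lt hle h8)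
      have h8' : 8 * ℓ < ε * l m := by
        rw [div_lt_iff₀ hε0] at h8; nlinarith
      nlinarith
    · rintro ⟨h1, h2⟩
      have hs := hstep m hm h1
      have h2' : ε * l m ≤ 8 * ℓ := by
        rw [le_div_iff₀ hε0] at h2; nlinarith
      nlinarith
    · rintro ⟨h1, h2⟩
      have hs := hstep m hm h1
      nlinarith
  refine ⟨key, ?_⟩
  intro hℓpos hl0 hN
  by_contra hcon
  push_neg at hcon
  have hl0pos : 0 < l 0 := lt_trans hℓpos hl0
  set k : ℤ := ⌈Real.log (l 0 / ℓ) / Real.log (1 / ε)⌉ with hk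
  have hlogr : 0 < Real.log (l 0 / ℓ) := Real.log_pos ((one_lt_div hℓpos).mpr hl0)
  have hloge : 0 < Real.log (1 / ε) := Real.log_pos (one_lt_one_div hε0 hε1)
  have hk1 : (1 : ℤ) ≤ k := by
    have : (0 : ℤ) < k := Int.ceil_pos.mpr (div_pos hlogr hloge)
    omega
  set K : ℕ := k.toNat with hK
  have hKk : (K : ℤ) = k := Int.toNat_of_nonneg (by omega)
  have hKN : K + 2 ≤ N := by
    have : (K : ℤ) + 2 ≤ (N : ℤ) := by rw [hKk]; exact hN
    exact_mod_cast this
  have step1 : ∀ m, m + 2 ≤ N → 8 * ℓ / ε < l m := by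
    intro m hm
    by_contra hle
    push_neg at hle
    have h1 := hcon m (by omega)
    have h2 := (key m (by omega)).2.1 ⟨h1, hle⟩
    have h3 := hcon (m + 1) (by omega)
    have h4 := (key (m + 1) (by omega)).2.2 ⟨h3, h2⟩
    have h5 := hcon (m + 2) (by omega)
    linarith
  have step2 : ∀ m, m + 2 ≤ N → l m ≤ ε ^ m * l 0 := by
    intro m
    induction m with
    | zero => intro _; simp
    | succ n ih =>
      intro h
      have ihn := ih (by omega)
      have h8 := step1 n (by omega)
      have ha := (key n (by omega)).1 h8
      calc l (n + 1) ≤ ε * l n := ha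
        _ ≤ ε * (ε ^ n * l 0) := by nlinarith
        _ = ε ^ (n + 1) * l 0 := by ring
  set M : ℕ := N - 2 with hMdef
  have hM2 : M + 2 = N := by omega
  have hεM : ε ^ M ≤ ε ^ K :=
    pow_le_pow_of_le_one hε0.le hε1.le (by omega)
  have hεK : ε ^ K * l 0 ≤ ℓ := by
    have hlog : Real.log (ε ^ K) ≤ Real.log (ℓ / l 0) := by
      rw [Real.log_pow, Real.log_div (ne_of_gt hℓpos) (ne_of_gt hl0pos)]
      have hceil : Real.log (l 0 / ℓ) / Real.log (1 / ε) ≤ (k : ℝ) := Int.le_ceil _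
      have hmul : Real.log (l 0 / ℓ) ≤ (k : ℝ) * Real.log (1 / ε) := by
        rw [div_le_iff₀ hloge] at hceil; linarith
      have hinv : Real.log (1 / ε) = -Real.log ε := by
        rw [one_div, Real.log_inv]
      have hdiv : Real.log (l 0 / ℓ) = Real.log (l 0) - Real.log ℓ :=
        Real.log_div (ne_of_gt hl0pos) (ne_of_gt hℓpos)
      have hKr : (K : ℝ) = (k : ℝ) := by exact_mod_cast hKk
      rw [hKr]
      rw [hinv, hdiv] at hmul
      linarith
    have h1 : ε ^ K ≤ ℓ / l 0 :=
      (Real.log_le_log_iff (pow_pos hε0 K) (div_pos hℓpos hl0pos)).mp hlog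
    rw [le_div_iff₀ hl0pos] at h1
    linarith
  have hM8 := step1 M (by omega)
  have hMv := step2 M (by omega)
  have hmono : ε ^ M * l 0 ≤ ε ^ K * l 0 :=
    mul_le_mul_of_nonneg_right hεM hl0pos.le
  have hbig : ℓ < 8 * ℓ / ε := by
    rw [lt_div_iff₀ hε0]; nlinarith
  linarith
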